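/- The canonical parametrisation of the Dirichlet family is unique: if A, A' ∈ [0,∞)^{k×k} each have at least one zero in every column, c, c' are strictly positive vectors in the simplex, and σ(A ln(kq) + ln c) = σ(A' ln(kq) + ln c') for all q in the interior of the probability simplex (k ≥ 2), then A = A' and c = c'. -/

import Mathlib

noncomputable def softmax {k : ℕ} (z : Fin k → ℝ) : Fin k → ℝ :=
  fun i => Real.exp (z i) / ∑ j, Real.exp (z j)

lemma softmax_diff {k : ℕ} (hk : 0 < k) (z z' : Fin k → ℝ)
    (h : softmax z = softmax z') : ∀ i i' : Fin k, z i - z' i = z i' - z' i' := by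
  haveI : Nonempty (Fin k) := ⟨⟨0, hk⟩⟩
  have hS : 0 < ∑ j, Real.exp (z j) :=
    Finset.sum_pos (fun j _ => Real.exp_pos _) Finset.univ_nonempty
  have hS' : 0 < ∑ j, Real.exp (z' j) :=
    Finset.sum_pos (fun j _ => Real.exp_pos _) Finset.univ_nonempty
  have key : ∀ i : Fin k, z i + Real.log (∑ j, Real.exp (z' j))
      = z' i + Real.log (∑ j, Real.exp (z j)) := by
    intro i
    have h1 := congrFun h i
    simp only [softmax] at h1
    have h2 : Real.exp (z i) * (∑ j, Real.exp (z' j))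
        = Real.exp (z' i) * (∑ j, Real.exp (z j)) := by
      field_simp at h1; linarith [h1]
    have h3 := congrArg Real.log h2
    rwa [Real.log_mul (Real.exp_ne_zero _) (ne_of_gt hS'),
      Real.log_mul (Real.exp_ne_zero _) (ne_of_gt hS), Real.log_exp, Real.log_exp] at h3
  intro i i'
  have k1 := key i
  have k2 := key i'
  linarith

lemma sum_ite_mul {k : ℕ} (j0 : Fin k) (C : Fin k → ℝ) (α β : ℝ) :
    ∑ j, C j * (if j = j0 then α else β) = (∑ j, C j) * β + C j0 * (α - β) := by
  have h : ∀ j : Fin k, C j * (if j = j0 then α else β)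
      = C j * β + (if j = j0 then C j0 * (α - β) else 0) := by
    intro j; by_cases hj : j = j0
    · subst hj; simp; ring
    · simp [hj]
  rw [Finset.sum_congr rfl (fun j _ => h j), Finset.sum_add_distrib,
    Finset.sum_ite_eq' Finset.univ j0, ← Finset.sum_mul]
  simp

lemma det_pos {K : ℝ} (hK : 2 ≤ K) :
    0 < Real.log (1/2) * Real.log ((2*K-3)/(2*(K-1)))
      - Real.log (3/2) * Real.log ((2*K-1)/(2*(K-1))) := by
  have h3 : (0:ℝ) < 2*K-3 := by linarith
  have h2 : (0:ℝ) < 2*(K-1) := by linarith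
  have h1 : (0:ℝ) < 2*K-1 := by linarith
  rw [Real.log_div (ne_of_gt h3) (ne_of_gt h2), Real.log_div (ne_of_gt h1) (ne_of_gt h2)]
  set L1 := Real.log (2*K-1)
  set L2 := Real.log (2*(K-1))
  set L3 := Real.log (2*K-3)
  have hhalf : Real.log (1/2) = -Real.log 2 := by rw [one_div, Real.log_inv]
  have hlog2 : Real.log (3/2) < Real.log 2 := Real.log_lt_log (by norm_num) (by norm_num)
  have hlog2' : 0 < Real.log (3/2) := Real.log_pos (by norm_num)
  have hL12 : L2 < L1 := Real.log_lt_log h2 (by linarith)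
  have hmid : L1 + L3 < L2 + L2 := by
    have hp : Real.log ((2*K-1)*(2*K-3)) < Real.log ((2*(K-1))*(2*(K-1))) :=
      Real.log_lt_log (by positivity) (by nlinarith)
    rwa [Real.log_mul (ne_of_gt h1) (ne_of_gt h3),
      Real.log_mul (ne_of_gt h2) (ne_of_gt h2)] at hp
  rw [hhalf]
  nlinarith [mul_pos hlog2' (sub_pos.mpr hL12)]

lemma col_const {k : ℕ} (hk : 2 ≤ k) (j0 : Fin k) (B : Matrix (Fin k) (Fin k) ℝ)
    (h : ∀ t : ℝ, 0 < t → t < 1 → ∀ i i' : Fin k,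
      B.mulVec (fun j => Real.log ((k:ℝ) * (if j = j0 then t else (1-t)/((k:ℝ)-1)))) i =
      B.mulVec (fun j => Real.log ((k:ℝ) * (if j = j0 then t else (1-t)/((k:ℝ)-1)))) i') :
    ∀ i i' : Fin k, B i j0 = B i' j0 := by
  intro i i'
  have hK : (2:ℝ) ≤ (k:ℝ) := by exact_mod_cast hk
  have hK0 : (k:ℝ) ≠ 0 := by linarith
  have hK1 : (k:ℝ) - 1 ≠ 0 := by linarith
  have hexp : ∀ (t : ℝ) (i : Fin k),
      B.mulVec (fun j => Real.log ((k:ℝ) * (if j = j0 then t else (1-t)/((k:ℝ)-1)))) i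
      = (∑ j, B i j) * Real.log ((k:ℝ) * ((1-t)/((k:ℝ)-1)))
        + B i j0 * (Real.log ((k:ℝ) * t) - Real.log ((k:ℝ) * ((1-t)/((k:ℝ)-1)))) := by
    intro t i
    have hw : ∀ j : Fin k, Real.log ((k:ℝ) * (if j = j0 then t else (1-t)/((k:ℝ)-1)))
        = (if j = j0 then Real.log ((k:ℝ) * t) else Real.log ((k:ℝ) * ((1-t)/((k:ℝ)-1)))) := by
      intro j; split_ifs <;> rfl
    simp only [Matrix.mulVec, dotProduct, hw]
    exact sum_ite_mul j0 (fun j => B i j) _ _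
  have ht1a : (0:ℝ) < 1/(2*(k:ℝ)) := by positivity
  have ht1b : 1/(2*(k:ℝ)) < 1 := by rw [div_lt_one (by linarith)]; linarith
  have ht2a : (0:ℝ) < 3/(2*(k:ℝ)) := by positivity
  have ht2b : 3/(2*(k:ℝ)) < 1 := by rw [div_lt_one (by linarith)]; linarith
  have E1 := h _ ht1a ht1b i i'
  have E2 := h _ ht2a ht2b i i'
  rw [hexp, hexp] at E1 E2
  have hv1 : (k:ℝ) * (1/(2*(k:ℝ))) = 1/2 := by field_simp
  have hv2 : (k:ℝ) * ((1 - 1/(2*(k:ℝ)))/((k:ℝ)-1)) = (2*(k:ℝ)-1)/(2*((k:ℝ)-1)) := by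
    field_simp
  have hv3 : (k:ℝ) * (3/(2*(k:ℝ))) = 3/2 := by field_simp
  have hv4 : (k:ℝ) * ((1 - 3/(2*(k:ℝ)))/((k:ℝ)-1)) = (2*(k:ℝ)-3)/(2*((k:ℝ)-1)) := by
    field_simp
  rw [hv1, hv2] at E1
  rw [hv3, hv4] at E2
  have hD := det_pos hK
  have hx : (B i j0 - B i' j0) *
      (Real.log (1/2) * Real.log ((2*(k:ℝ)-3)/(2*((k:ℝ)-1)))
        - Real.log (3/2) * Real.log ((2*(k:ℝ)-1)/(2*((k:ℝ)-1)))) = 0 := by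
    linear_combination Real.log ((2*(k:ℝ)-3)/(2*((k:ℝ)-1))) * E1
      - Real.log ((2*(k:ℝ)-1)/(2*((k:ℝ)-1))) * E2
  rcases mul_eq_zero.mp hx with h0 | h0
  · linarith [sub_eq_zero.mp h0]
  · exact absurd h0 (ne_of_gt hD)

/-- The canonical parametrisation of the Dirichlet calibration family is
unique: a non-negative matrix with a zero in each column together with a
strictly positive simplex vector is uniquely determined by the calibration map. -/
theorem canonical_parametrisation_unique {k : ℕ} (hk : 2 ≤ k)
    (A A' : Matrix (Fin k) (Fin k) ℝ)
    (hA : ∀ i j, 0 ≤ A i j) (hA' : ∀ i j, 0 ≤ A' i j)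
    (hAz : ∀ j, ∃ i, A i j = 0) (hA'z : ∀ j, ∃ i, A' i j = 0)
    (c c' : Fin k → ℝ)
    (hc : ∀ i, 0 < c i) (hcs : ∑ i, c i = 1)
    (hc' : ∀ i, 0 < c' i) (hcs' : ∑ i, c' i = 1)
    (heq : ∀ q : Fin k → ℝ, (∀ i, 0 < q i) → (∑ i, q i = 1) →
      softmax (A.mulVec (fun i => Real.log ((k : ℝ) * q i)) + fun i => Real.log (c i)) =
      softmax (A'.mulVec (fun i => Real.log ((k : ℝ) * q i)) + fun i => Real.log (c' i))) :
    A = A' ∧ c = c' := by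
  have hk0 : 0 < k := by omega
  have hK : (2:ℝ) ≤ (k:ℝ) := by exact_mod_cast hk
  have hK0 : (k:ℝ) ≠ 0 := by linarith
  have hK1 : (k:ℝ) - 1 ≠ 0 := by linarith
  -- Step 1: c = c', via the uniform distribution
  have hcc : c = c' := by
    have hqpos : ∀ i : Fin k, 0 < (fun _ : Fin k => 1/(k:ℝ)) i := fun i => by positivity
    have hqsum : ∑ i : Fin k, (fun _ : Fin k => 1/(k:ℝ)) i = 1 := by
      simp [Finset.sum_const, Finset.card_univ]
      field_simp
    have hs := heq _ hqpos hqsum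
    have hlog : Real.log ((k:ℝ) * (1/(k:ℝ))) = 0 := by
      rw [mul_one_div_cancel hK0, Real.log_one]
    have hmv : ∀ (M : Matrix (Fin k) (Fin k) ℝ) (i : Fin k),
        M.mulVec (fun _ : Fin k => Real.log ((k:ℝ) * (1/(k:ℝ)))) i = 0 := by
      intro M i
      simp [Matrix.mulVec, dotProduct, mul_inv_cancel₀ hK0]
    have hd := softmax_diff hk0 _ _ hs
    set i0 : Fin k := ⟨0, hk0⟩
    have hce : ∀ i, c i = c' i * Real.exp (Real.log (c i0) - Real.log (c' i0)) := by
      intro i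
      have h1 := hd i i0
      simp only [Pi.add_apply, hmv, zero_add] at h1
      have h2 : Real.log (c i) = Real.log (c' i) + (Real.log (c i0) - Real.log (c' i0)) := by
        linarith
      calc c i = Real.exp (Real.log (c i)) := (Real.exp_log (hc i)).symm
        _ = Real.exp (Real.log (c' i)) * Real.exp (Real.log (c i0) - Real.log (c' i0)) := by
            rw [h2, Real.exp_add]
        _ = c' i * Real.exp (Real.log (c i0) - Real.log (c' i0)) := by
            rw [Real.exp_log (hc' i)]
    have hE : Real.exp (Real.log (c i0) - Real.log (c' i0)) = 1 := by
      have h1 : ∑ i, c i = (∑ i, c' i) * Real.exp (Real.log (c i0) - Real.log (c' i0)) := by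
        rw [Finset.sum_mul]
        exact Finset.sum_congr rfl (fun i _ => hce i)
      rw [hcs, hcs', one_mul] at h1
      exact h1.symm
    funext i
    rw [hce i, hE, mul_one]
  subst hcc
  refine ⟨?_, rfl⟩
  -- Step 2: A = A'
  ext i j0
  have hB := col_const hk j0 (A - A') ?_
  · obtain ⟨i1, h1⟩ := hAz j0
    obtain ⟨i2, h2⟩ := hA'z j0
    have e1 := hB i i1
    have e2 := hB i i2
    simp only [Matrix.sub_apply] at e1 e2
    have v1 : 0 ≤ A' i1 j0 := hA' i1 j0
    have v2 : 0 ≤ A i2 j0 := hA i2 j0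
    rw [h1] at e1
    rw [h2] at e2
    linarith
  · intro t ht0 ht1 i i'
    set q : Fin k → ℝ := fun j => if j = j0 then t else (1-t)/((k:ℝ)-1) with hq
    have hb : 0 < (1-t)/((k:ℝ)-1) := by
      apply div_pos (by linarith) (by linarith)
    have hqpos : ∀ j, 0 < q j := by
      intro j; rw [hq]; dsimp only; split_ifs
      · exact ht0
      · exact hb
    have hqsum : ∑ j, q j = 1 := by
      have h1 : ∀ j : Fin k, q j = (1:ℝ) * (if j = j0 then t else (1-t)/((k:ℝ)-1)) :=
        fun j => (one_mul _).symm
      rw [Finset.sum_congr rfl (fun j _ => h1 j), sum_ite_mul]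
      simp only [Finset.sum_const, Finset.card_univ, Fintype.card_fin, nsmul_eq_mul,
        mul_one, one_mul]
      field_simp
      ring
    have hs := heq q hqpos hqsum
    have hd := softmax_diff hk0 _ _ hs i i'
    simp only [Pi.add_apply] at hd
    have : (A - A').mulVec (fun j => Real.log ((k:ℝ) * q j)) i
        = (A - A').mulVec (fun j => Real.log ((k:ℝ) * q j)) i' := by
      rw [Matrix.sub_mulVec]
      simp only [Pi.sub_apply]
      linarith
    exact this
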